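/- For all n ≥ 1 and any integer c with 1 ≤ c ≤ n, A(n-c)/A(n) ≤ (2/3)^{c(2n-c-1)/2}. -/

import Mathlib

open Finset Nat

/-- `A n = ∏_{k=0}^{n-1} (3k+1)!/(n+k)!`, the ASM numbers (as rationals), with `A 0 = 1`. -/
def A (n : ℕ) : ℚ := ∏ k ∈ Finset.range n, ((3 * k + 1)! : ℚ) / ((n + k)! : ℚ)

/-- numerator product -/
def Pnum (n : ℕ) : ℕ := ∏ k ∈ Finset.range n, (3 * k + 1)!

/-- superfactorial -/
def SF (n : ℕ) : ℕ := ∏ k ∈ Finset.range n, k !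

lemma SF_two_mul (n : ℕ) : SF (2 * n) = SF n * ∏ k ∈ Finset.range n, (n + k)! := by
  rw [two_mul, SF, Finset.prod_range_add]; rfl

lemma SF_pos (n : ℕ) : 0 < SF n := Finset.prod_pos fun k _ => Nat.factorial_pos k

lemma Pnum_pos (n : ℕ) : 0 < Pnum n := Finset.prod_pos fun k _ => Nat.factorial_pos _

lemma A_eq (n : ℕ) : A n = ((Pnum n * SF n : ℕ) : ℚ) / ((SF (2 * n) : ℕ) : ℚ) := by
  have h : ((SF (2 * n) : ℕ) : ℚ) = (SF n : ℚ) * ∏ k ∈ Finset.range n, ((n + k)! : ℚ) := by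
    rw [SF_two_mul]; push_cast; ring
  rw [A, Finset.prod_div_distrib, h]
  have h1 : (∏ k ∈ Finset.range n, ((3 * k + 1)! : ℚ)) = (Pnum n : ℚ) := by
    rw [Pnum]; push_cast; ring
  rw [h1]
  have hSFn : ((SF n : ℕ) : ℚ) ≠ 0 := by
    exact_mod_cast (SF_pos n).ne'
  have hP : (∏ k ∈ Finset.range n, ((n + k)! : ℚ)) ≠ 0 := by
    apply Finset.prod_ne_zero_iff.mpr
    intro k _
    exact_mod_cast (Nat.factorial_pos _).ne'
  push_cast
  field_simp

lemma A_pos (n : ℕ) : 0 < A n := by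
  rw [A_eq]
  apply _root_.div_pos
  · exact_mod_cast Nat.mul_pos (Pnum_pos n) (SF_pos n)
  · exact_mod_cast SF_pos (2 * n)

/-- The ratio `A (n+1) / A n`. -/
noncomputable def G (n : ℕ) : ℚ := ((3 * n + 1)! * n ! : ℚ) / ((2 * n + 1)! * (2 * n)! : ℚ)

lemma G_pos (n : ℕ) : 0 < G n := by
  apply _root_.div_pos <;> positivity

lemma A_succ (n : ℕ) : A (n + 1) = A n * G n := by
  rw [A_eq, A_eq, G]
  have hP : Pnum (n + 1) = Pnum n * (3 * n + 1)! := by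
    rw [Pnum, Pnum, Finset.prod_range_succ]
  have hS : SF (n + 1) = SF n * n ! := by
    rw [SF, SF, Finset.prod_range_succ]
  have hS2 : SF (2 * (n + 1)) = SF (2 * n) * (2 * n)! * (2 * n + 1)! := by
    have : 2 * (n + 1) = (2 * n + 1) + 1 := by ring
    rw [this, SF, Finset.prod_range_succ, Finset.prod_range_succ, ← SF]
  rw [hP, hS, hS2]
  have h1 : ((SF (2 * n) : ℕ) : ℚ) ≠ 0 := by exact_mod_cast (SF_pos (2 * n)).ne'
  have h2 : ((2 * n)! : ℚ) ≠ 0 := by exact_mod_cast (Nat.factorial_pos _).ne'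
  have h3 : ((2 * n + 1)! : ℚ) ≠ 0 := by exact_mod_cast (Nat.factorial_pos _).ne'
  push_cast
  field_simp

lemma G_succ (n : ℕ) :
    G (n + 1) = G n * (((3 * n + 4) * (3 * n + 3) * (3 * n + 2) * (n + 1) : ℚ) /
      ((2 * n + 3) * (2 * n + 2) * (2 * n + 2) * (2 * n + 1))) := by
  rw [G, G]
  have e1 : (3 * (n + 1) + 1)! = (3 * n + 4) * ((3 * n + 3) * ((3 * n + 2) * (3 * n + 1)!)) := by
    rw [show 3 * (n + 1) + 1 = (3 * n + 3) + 1 by ring, Nat.factorial_succ,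
      show 3 * n + 3 = (3 * n + 2) + 1 by ring, Nat.factorial_succ,
      show 3 * n + 2 = (3 * n + 1) + 1 by ring, Nat.factorial_succ]
  have e2 : (n + 1)! = (n + 1) * n ! := Nat.factorial_succ n
  have e3 : (2 * (n + 1) + 1)! = (2 * n + 3) * ((2 * n + 2) * (2 * n + 1)!) := by
    rw [show 2 * (n + 1) + 1 = (2 * n + 2) + 1 by ring, Nat.factorial_succ,
      show 2 * n + 2 = (2 * n + 1) + 1 by ring, Nat.factorial_succ]
  have e4 : (2 * (n + 1))! = (2 * n + 2) * ((2 * n + 1) * (2 * n)!) := by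
    rw [show 2 * (n + 1) = (2 * n + 1) + 1 by ring, Nat.factorial_succ,
      show 2 * n + 1 = (2 * n) + 1 from rfl, Nat.factorial_succ]
  rw [e1, e2, e3, e4]
  have h1 : ((3 * n + 1)! : ℚ) ≠ 0 := by exact_mod_cast (Nat.factorial_pos _).ne'
  have h2 : ((2 * n)! : ℚ) ≠ 0 := by exact_mod_cast (Nat.factorial_pos _).ne'
  have h3 : ((2 * n + 1)! : ℚ) ≠ 0 := by exact_mod_cast (Nat.factorial_pos _).ne'
  have h4 : ((n : ℚ) + 1) ≠ 0 := by positivity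
  have h5 : (2 * (n : ℚ) + 1) ≠ 0 := by positivity
  have h6 : (2 * (n : ℚ) + 2) ≠ 0 := by positivity
  have h7 : (2 * (n : ℚ) + 3) ≠ 0 := by positivity
  have h8 : ((n ! : ℕ) : ℚ) ≠ 0 := by exact_mod_cast (Nat.factorial_pos _).ne'
  push_cast
  field_simp

lemma G_ge (n : ℕ) : (3 / 2 : ℚ) ^ n ≤ G n := by
  induction n with
  | zero => simp [G]
  | succ n ih =>
    rw [G_succ, pow_succ]
    have hratio : (3 / 2 : ℚ) ≤ ((3 * n + 4) * (3 * n + 3) * (3 * n + 2) * (n + 1) : ℚ) /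
        ((2 * n + 3) * (2 * n + 2) * (2 * n + 2) * (2 * n + 1)) := by
      rw [div_le_div_iff₀ (by norm_num) (by positivity)]
      have hn : (0 : ℚ) ≤ (n : ℚ) := Nat.cast_nonneg n
      nlinarith [sq_nonneg ((n : ℚ)), sq_nonneg ((n : ℚ) + 1), mul_nonneg hn hn,
        mul_nonneg (mul_nonneg hn hn) hn, mul_nonneg (mul_nonneg (mul_nonneg hn hn) hn) hn]
    have h0 : (0 : ℚ) ≤ (3 / 2 : ℚ) ^ n := by positivity
    calc (3 / 2 : ℚ) ^ n * (3 / 2) ≤ G n * (((3 * n + 4) * (3 * n + 3) * (3 * n + 2) * (n + 1) : ℚ) /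
        ((2 * n + 3) * (2 * n + 2) * (2 * n + 2) * (2 * n + 1))) := by
          apply mul_le_mul ih hratio (by norm_num) (le_of_lt (G_pos n))
      _ = _ := rfl

lemma A_key (d m : ℕ) : A m * (3 / 2 : ℚ) ^ (∑ j ∈ Finset.range d, (m + j)) ≤ A (m + d) := by
  induction d with
  | zero => simp
  | succ d ih =>
    rw [Finset.sum_range_succ, pow_add, ← mul_assoc]
    have h1 : A m * (3 / 2 : ℚ) ^ (∑ j ∈ Finset.range d, (m + j)) * (3 / 2) ^ (m + d)
        ≤ A (m + d) * (3 / 2) ^ (m + d) := by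
      apply mul_le_mul_of_nonneg_right ih (by positivity)
    have h2 : A (m + d) * (3 / 2 : ℚ) ^ (m + d) ≤ A (m + d) * G (m + d) := by
      apply mul_le_mul_of_nonneg_left (G_ge (m + d)) (le_of_lt (A_pos (m + d)))
    calc A m * (3 / 2 : ℚ) ^ (∑ j ∈ Finset.range d, (m + j)) * (3 / 2) ^ (m + d)
        ≤ A (m + d) * G (m + d) := le_trans h1 h2
      _ = A (m + d + 1) := (A_succ (m + d)).symm

theorem stmt_4 (n c : ℕ) (hn : 1 ≤ n) (hc : 1 ≤ c) (hcn : c ≤ n) :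
    A (n - c) / A n ≤ (2 / 3 : ℚ) ^ (c * (2 * n - c - 1) / 2) := by
  obtain ⟨m, rfl⟩ : ∃ m, n = m + c := ⟨n - c, by omega⟩
  have hmc : m + c - c = m := by omega
  rw [hmc]
  set E := ∑ j ∈ Finset.range c, (m + j) with hE
  have hEeq : c * (2 * (m + c) - c - 1) / 2 = E := by
    obtain ⟨s, rfl⟩ : ∃ s, c = s + 1 := ⟨c - 1, by omega⟩
    have h1 : 2 * (m + (s + 1)) - (s + 1) - 1 = 2 * m + s := by omega
    rw [h1, hE]
    have h2 : ∑ j ∈ Finset.range (s + 1), (m + j) = (s + 1) * m + ∑ j ∈ Finset.range (s + 1), j := by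
      rw [Finset.sum_add_distrib, Finset.sum_const, Finset.card_range, smul_eq_mul]
    have h3 : (∑ j ∈ Finset.range (s + 1), j) * 2 = (s + 1) * s := by
      rw [Finset.sum_range_id_mul_two]; simp
    have h4 : ((s + 1) * m + ∑ j ∈ Finset.range (s + 1), j) * 2 = (s + 1) * (2 * m + s) := by
      rw [add_mul, h3]; ring
    omega
  rw [hEeq]
  have hkey := A_key c m
  have hAn : 0 < A (m + c) := A_pos (m + c)
  have hpow : (0 : ℚ) < (3 / 2 : ℚ) ^ E := by positivity
  rw [div_le_iff₀ hAn]
  have : A m ≤ A (m + c) / (3 / 2 : ℚ) ^ E := (le_div_iff₀ hpow).mpr hkey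
  calc A m ≤ A (m + c) / (3 / 2 : ℚ) ^ E := this
    _ = (2 / 3 : ℚ) ^ E * A (m + c) := by
        rw [div_eq_mul_inv, ← inv_pow]
        norm_num [mul_comm]
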